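/- For every n ≥ 80 there exists an opinion poll distribution on a node set of size 2(n+1) — namely, the distribution in which each of the n+1 'original' nodes i independently, for each original node j ≠ i, either sends edges to both j and its copy j' (with probability 1/2) or sends no edge to j and j' (with probability 1/2), while copies cast no votes — such that for every choice of default node t, the AVD mechanism with default t satisfies E[Δ(x) − d_w(x)] ≥ (1/6)·√(n·ln n), where w is the AVD winner; hence AVD has expected additive approximation Ω(√(n·ln n)) on opinion poll instances. -/

import Mathlib

open Finset

/-- `deg x S j` is the in-degree of node `j` counting only incoming edges from
nodes in the set `S`, given the nomination profile `x`. -/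
def deg {N : Type*} [Fintype N] [DecidableEq N] (x : N → N → Bool) (S : Finset N) (j : N) : ℕ :=
  (S.filter (fun i => x i j)).card

/-- In-degree of node `j` (no self-votes counted). -/
def indeg {N : Type*} [Fintype N] [DecidableEq N] (x : N → N → Bool) (j : N) : ℕ :=
  deg x (Finset.univ.erase j) j

/-- The maximum in-degree `Δ(x)`. -/
def maxdeg {N : Type*} [Fintype N] [DecidableEq N] (x : N → N → Bool) : ℕ :=
  Finset.univ.sup (indeg x)

/-- `beats x t a b` : node `a` beats node `b` (with default node `t`). -/
def beats {N : Type*} [Fintype N] [DecidableEq N] (x : N → N → Bool) (t a b : N) : Prop :=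
  if b = t then deg x (Finset.univ \ {a, t}) a > deg x (Finset.univ \ {a, t}) t
  else if a = t then deg x (Finset.univ \ {b, t}) t > deg x (Finset.univ \ {b, t}) b
  else deg x (Finset.univ \ {a, b, t}) a > deg x (Finset.univ \ {a, b, t}) b

/-- `a` beats every other node. -/
def beatsAll {N : Type*} [Fintype N] [DecidableEq N] (x : N → N → Bool) (t a : N) : Prop :=
  ∀ b, b ≠ a → beats x t a b

open Classical in
/-- The AVD mechanism with default node `t`. -/
noncomputable def avdWinner {N : Type*} [Fintype N] [DecidableEq N]
    (x : N → N → Bool) (t : N) : N :=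
  if h : ∃ a, beatsAll x t a then h.choose else t

/-- Probability of the profile `x` in the a priori popularity model with
popularities `p`. -/
noncomputable def apWeight {N : Type*} [Fintype N] [DecidableEq N]
    (p : N → ℝ) (x : N → N → Bool) : ℝ :=
  ∏ i, ∏ j, if i = j then (if x i j then 0 else 1) else (if x i j then p j else 1 - p j)


/-- The opinion poll distribution of the duplication construction on the node set
`Fin (n+1) ⊕ Fin (n+1)` (`inl` = original nodes, `inr` = their copies): each
original node `i` independently, for each original node `j ≠ i`, either votes for
both `j` and its copy `j'` (with probability `1/2`) or for neither, and copies
cast no votes. `owWeight n x` is the probability of the profile `x`. -/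
noncomputable def owWeight (n : ℕ)
    (x : (Fin (n + 1) ⊕ Fin (n + 1)) → (Fin (n + 1) ⊕ Fin (n + 1)) → Bool) : ℝ :=
  (∏ i : Fin (n + 1),
      if x (Sum.inl i) (Sum.inl i) = false ∧ x (Sum.inl i) (Sum.inr i) = false ∧
          ∀ j : Fin (n + 1), x (Sum.inl i) (Sum.inl j) = x (Sum.inl i) (Sum.inr j)
      then ((1 : ℝ) / 2) ^ n else 0) *
  (∏ i : Fin (n + 1),
      if ∀ j : Fin (n + 1) ⊕ Fin (n + 1), x (Sum.inr i) j = false then (1 : ℝ) else 0)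

namespace AVD

/-- weight of a boolean vector -/
def wt {α : Type*} [Fintype α] (c : α → Bool) : ℕ := (Finset.univ.filter (fun i => c i)).card

lemma card_wt_eq {α : Type*} [Fintype α] [DecidableEq α] (k : ℕ) :
    (Finset.univ.filter fun c : α → Bool => wt c = k).card = (Fintype.card α).choose k := by
  rw [← Finset.card_univ, ← Finset.card_powersetCard k (Finset.univ : Finset α)]
  refine Finset.card_bij' (fun c _ => Finset.univ.filter fun i => c i)
    (fun s _ => fun i => decide (i ∈ s)) ?_ ?_ ?_ ?_
  · intro c hc
    rw [Finset.mem_powersetCard]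
    exact ⟨Finset.subset_univ _, (Finset.mem_filter.mp hc).2⟩
  · intro s hs
    rw [Finset.mem_filter]
    refine ⟨Finset.mem_univ _, ?_⟩
    rw [Finset.mem_powersetCard] at hs
    have : wt (fun i => decide (i ∈ s)) = #s := by
      unfold wt
      congr 1
      ext i
      simp
    rw [this, hs.2]
  · intro c hc
    funext i
    by_cases h : c i <;> simp [h]
  · intro s hs
    ext i
    simp

lemma card_wt_lt_le {α : Type*} [Fintype α] [DecidableEq α] (k : ℕ) :
    (Finset.univ.filter fun c : α → Bool => wt c < k).card
      ≤ 2 ^ (Fintype.card α) - (Fintype.card α).choose k := by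
  have hd : Disjoint (Finset.univ.filter fun c : α → Bool => wt c < k)
      (Finset.univ.filter fun c : α → Bool => wt c = k) := by
    rw [Finset.disjoint_filter]
    intro c _ h1 h2
    omega
  have := Finset.card_le_card (Finset.subset_univ
    ((Finset.univ.filter fun c : α → Bool => wt c < k) ∪
     (Finset.univ.filter fun c : α → Bool => wt c = k)))
  rw [Finset.card_union_of_disjoint hd, Finset.card_univ, Fintype.card_fun, Fintype.card_bool,
    card_wt_eq] at this
  omega

lemma choose_le_two_pow (N k : ℕ) : N.choose k ≤ 2 ^ N := by
  rcases le_or_gt k N with h | h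
  · calc N.choose k ≤ ∑ m ∈ Finset.range (N + 1), N.choose m :=
          Finset.single_le_sum (fun _ _ => Nat.zero_le _) (Finset.mem_range.mpr (by omega))
      _ = 2 ^ N := Nat.sum_range_choose N
  · rw [Nat.choose_eq_zero_of_lt h]; positivity

end AVD

namespace AVD

abbrev Wn (n : ℕ) := ∀ j : Fin (n+1), {i : Fin (n+1) // i ≠ j} → Bool

variable {n : ℕ}

def Dc (w : Wn n) (j : Fin (n+1)) : ℕ := wt (w j)

def Mx (w : Wn n) : ℕ := Finset.univ.sup (Dc w)

def eprof (w : Wn n) : (Fin (n+1) ⊕ Fin (n+1)) → (Fin (n+1) ⊕ Fin (n+1)) → Bool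
  | Sum.inl i, Sum.inl j => if h : i ≠ j then w j ⟨i, h⟩ else false
  | Sum.inl i, Sum.inr j => if h : i ≠ j then w j ⟨i, h⟩ else false
  | Sum.inr _, _ => false

lemma eprof_col (w : Wn n) (j : Fin (n+1)) (k : Fin (n+1) ⊕ Fin (n+1)) :
    eprof w k (Sum.inl j) = eprof w k (Sum.inr j) := by
  rcases k with i | i <;> rfl

lemma eprof_diag (w : Wn n) (i : Fin (n+1)) : eprof w (Sum.inl i) (Sum.inl i) = false := by
  simp [eprof]

lemma eprof_diag' (w : Wn n) (i : Fin (n+1)) : eprof w (Sum.inl i) (Sum.inr i) = false := by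
  simp [eprof]

lemma deg_twin (w : Wn n) (S : Finset (Fin (n+1) ⊕ Fin (n+1))) (j : Fin (n+1)) :
    deg (eprof w) S (Sum.inl j) = deg (eprof w) S (Sum.inr j) := by
  unfold deg
  congr 1
  apply Finset.filter_congr
  intro k _
  rw [eprof_col]

def tw : (Fin (n+1) ⊕ Fin (n+1)) → (Fin (n+1) ⊕ Fin (n+1)) := Sum.elim Sum.inr Sum.inl

lemma tw_ne (a : Fin (n+1) ⊕ Fin (n+1)) : tw a ≠ a := by
  rcases a with i | i <;> simp [tw]

lemma deg_tw (w : Wn n) (S : Finset (Fin (n+1) ⊕ Fin (n+1))) (a : Fin (n+1) ⊕ Fin (n+1)) :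
    deg (eprof w) S a = deg (eprof w) S (tw a) := by
  rcases a with j | j
  · exact deg_twin w S j
  · exact (deg_twin w S j).symm

lemma not_beats (w : Wn n) (t a : Fin (n+1) ⊕ Fin (n+1)) : ¬ beats (eprof w) t a (tw a) := by
  unfold beats
  split_ifs with h1 h2
  · rw [← h1, ← deg_tw]
    exact lt_irrefl _
  · rw [h2, deg_tw w _ t]
    exact lt_irrefl _
  · rw [deg_tw w _ a]
    exact lt_irrefl _

lemma winner_eq (w : Wn n) (t : Fin (n+1) ⊕ Fin (n+1)) : avdWinner (eprof w) t = t := by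
  unfold avdWinner
  rw [dif_neg]
  rintro ⟨a, ha⟩
  exact not_beats w t a (ha (tw a) (tw_ne a))

lemma indeg_inl (w : Wn n) (j : Fin (n+1)) : indeg (eprof w) (Sum.inl j) = Dc w j := by
  unfold indeg deg
  have h1 : (Finset.univ.erase (Sum.inl j)).filter (fun k => eprof w k (Sum.inl j))
      = Finset.univ.filter (fun k => eprof w k (Sum.inl j)) := by
    ext k
    simp only [Finset.mem_filter, Finset.mem_erase, Finset.mem_univ, true_and, and_true]
    constructor
    · tauto
    · intro hk
      refine ⟨fun hkj => ?_, hk⟩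
      rw [hkj, eprof_diag] at hk
      exact Bool.false_ne_true hk
  rw [h1, Finset.card_filter, Fintype.sum_sum_type]
  have h2 : ∀ i : Fin (n+1), (if eprof w (Sum.inr i) (Sum.inl j) then 1 else 0) = 0 := by
    intro i; rfl
  rw [Finset.sum_congr rfl (fun i _ => h2 i), Finset.sum_const_zero, add_zero]
  unfold Dc wt
  rw [Finset.card_filter]
  rw [← Finset.sum_erase_add _ _ (Finset.mem_univ j)]
  have h3 : (if eprof w (Sum.inl j) (Sum.inl j) then 1 else 0) = 0 := by
    rw [eprof_diag]; rfl
  rw [h3, add_zero]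
  rw [Finset.sum_subtype (p := fun i => i ≠ j) (Finset.univ.erase j)
    (fun i => by simp [Finset.mem_erase]) (fun i => if eprof w (Sum.inl i) (Sum.inl j) then 1 else 0)]
  apply Finset.sum_congr rfl
  intro i _
  have : eprof w (Sum.inl i.1) (Sum.inl j) = w j i := by
    show (if h : i.1 ≠ j then w j ⟨i.1, h⟩ else false) = w j i
    rw [dif_pos i.2]
  rw [this]

lemma indeg_inr (w : Wn n) (j : Fin (n+1)) : indeg (eprof w) (Sum.inr j) = Dc w j := by
  unfold indeg
  have h1 : (Finset.univ.erase (Sum.inr j)).filter (fun k => eprof w k (Sum.inr j))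
      = Finset.univ.filter (fun k => eprof w k (Sum.inr j)) := by
    ext k
    simp only [Finset.mem_filter, Finset.mem_erase, Finset.mem_univ, true_and, and_true]
    constructor
    · tauto
    · intro hk
      refine ⟨fun hkj => ?_, hk⟩
      rw [hkj] at hk
      exact Bool.false_ne_true hk
  have h2 : Finset.univ.filter (fun k => eprof w k (Sum.inr j))
      = Finset.univ.filter (fun k => eprof w k (Sum.inl j)) := by
    apply Finset.filter_congr
    intro k _
    rw [eprof_col]
  have h1' : (Finset.univ.erase (Sum.inl j)).filter (fun k => eprof w k (Sum.inl j))
      = Finset.univ.filter (fun k => eprof w k (Sum.inl j)) := by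
    ext k
    simp only [Finset.mem_filter, Finset.mem_erase, Finset.mem_univ, true_and, and_true]
    constructor
    · tauto
    · intro hk
      refine ⟨fun hkj => ?_, hk⟩
      rw [hkj, eprof_diag] at hk
      exact Bool.false_ne_true hk
  unfold deg
  rw [h1, h2, ← h1']
  exact indeg_inl w j

lemma indeg_eq (w : Wn n) (k : Fin (n+1) ⊕ Fin (n+1)) :
    indeg (eprof w) k = Dc w (Sum.elim id id k) := by
  rcases k with j | j
  · exact indeg_inl w j
  · exact indeg_inr w j

lemma maxdeg_eq (w : Wn n) : maxdeg (eprof w) = Mx w := by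
  apply le_antisymm
  · apply Finset.sup_le
    intro k _
    rw [indeg_eq]
    exact Finset.le_sup (Finset.mem_univ _)
  · apply Finset.sup_le
    intro j _
    rw [← indeg_inl w j]
    exact Finset.le_sup (f := indeg (eprof w)) (Finset.mem_univ (Sum.inl j))

end AVD

namespace AVD

lemma owWeight_eprof (w : Wn n) : owWeight n (eprof w) = ((1:ℝ)/2) ^ (n * (n+1)) := by
  unfold owWeight
  have h1 : ∀ i : Fin (n+1),
      (if eprof w (Sum.inl i) (Sum.inl i) = false ∧ eprof w (Sum.inl i) (Sum.inr i) = false ∧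
          ∀ j : Fin (n+1), eprof w (Sum.inl i) (Sum.inl j) = eprof w (Sum.inl i) (Sum.inr j)
        then ((1:ℝ)/2) ^ n else 0) = ((1:ℝ)/2)^n := by
    intro i
    rw [if_pos ⟨eprof_diag w i, eprof_diag' w i, fun j => eprof_col w j (Sum.inl i)⟩]
  have h2 : ∀ i : Fin (n+1),
      (if ∀ j : Fin (n+1) ⊕ Fin (n+1), eprof w (Sum.inr i) j = false then (1:ℝ) else 0) = 1 := by
    intro i
    rw [if_pos (show (∀ j : Fin (n+1) ⊕ Fin (n+1), eprof w (Sum.inr i) j = false) from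
      fun j => by cases j <;> rfl)]
  rw [Finset.prod_congr rfl (fun i _ => h1 i), Finset.prod_congr rfl (fun i _ => h2 i)]
  rw [Finset.prod_const, Finset.prod_const_one, mul_one, Finset.card_univ, Fintype.card_fin,
    ← pow_mul]

lemma owWeight_support {x : (Fin (n+1) ⊕ Fin (n+1)) → (Fin (n+1) ⊕ Fin (n+1)) → Bool}
    (hx : owWeight n x ≠ 0) : x = eprof (fun j i => x (Sum.inl i.1) (Sum.inl j)) := by
  unfold owWeight at hx
  rcases mul_ne_zero_iff.mp hx with ⟨hx1, hx2⟩
  rw [Finset.prod_ne_zero_iff] at hx1 hx2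
  have h1 : ∀ i : Fin (n+1), x (Sum.inl i) (Sum.inl i) = false ∧ x (Sum.inl i) (Sum.inr i) = false ∧
      ∀ j : Fin (n+1), x (Sum.inl i) (Sum.inl j) = x (Sum.inl i) (Sum.inr j) := by
    intro i
    by_contra h
    exact hx1 i (Finset.mem_univ i) (if_neg h)
  have h2 : ∀ i : Fin (n+1), ∀ b, x (Sum.inr i) b = false := by
    intro i
    by_contra h
    exact hx2 i (Finset.mem_univ i) (if_neg h)
  funext a b
  rcases a with i | i
  · rcases b with j | j
    · show x (Sum.inl i) (Sum.inl j) = (if h : i ≠ j then x (Sum.inl i) (Sum.inl j) else false)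
      split_ifs with h
      · rfl
      · push_neg at h
        subst h
        exact (h1 i).1
    · show x (Sum.inl i) (Sum.inr j) = (if h : i ≠ j then x (Sum.inl i) (Sum.inl j) else false)
      split_ifs with h
      · exact ((h1 i).2.2 j).symm
      · push_neg at h
        subst h
        exact (h1 i).2.1
  · show x (Sum.inr i) b = eprof _ (Sum.inr i) b
    cases b <;> exact h2 i _

lemma eprof_injective : Function.Injective (eprof (n := n)) := by
  intro w w' h
  funext j i
  have := congrFun (congrFun h (Sum.inl i.1)) (Sum.inl j)
  show w j i = w' j i
  have e1 : eprof w (Sum.inl i.1) (Sum.inl j) = w j i := by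
    show (if h : i.1 ≠ j then w j ⟨i.1, h⟩ else false) = w j i
    rw [dif_pos i.2]
  have e2 : eprof w' (Sum.inl i.1) (Sum.inl j) = w' j i := by
    show (if h : i.1 ≠ j then w' j ⟨i.1, h⟩ else false) = w' j i
    rw [dif_pos i.2]
  rw [← e1, ← e2, this]

lemma sum_red (g : ((Fin (n+1) ⊕ Fin (n+1)) → (Fin (n+1) ⊕ Fin (n+1)) → Bool) → ℝ) :
    ∑ x : (Fin (n+1) ⊕ Fin (n+1)) → (Fin (n+1) ⊕ Fin (n+1)) → Bool, owWeight n x * g x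
      = ((1:ℝ)/2) ^ (n * (n+1)) * ∑ w : Wn n, g (eprof w) := by
  have hstep : ∑ x : (Fin (n+1) ⊕ Fin (n+1)) → (Fin (n+1) ⊕ Fin (n+1)) → Bool,
      owWeight n x * g x
      = ∑ x ∈ Finset.univ.image (eprof (n := n)), owWeight n x * g x := by
    symm
    apply Finset.sum_subset (Finset.subset_univ _)
    intro x _ hx
    rcases eq_or_ne (owWeight n x) 0 with h | h
    · rw [h, zero_mul]
    · exfalso
      apply hx
      rw [Finset.mem_image]
      exact ⟨_, Finset.mem_univ _, (owWeight_support h).symm⟩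
  rw [hstep, Finset.sum_image (fun w _ w' _ h => eprof_injective h), Finset.mul_sum]
  apply Finset.sum_congr rfl
  intro w _
  rw [owWeight_eprof]

end AVD

namespace AVD

lemma cb_sqrt (k : ℕ) (hk : 1 ≤ k) :
    (4:ℝ)^k ≤ 2 * Real.sqrt k * (Nat.centralBinom k : ℝ) := by
  induction k, hk using Nat.le_induction with
  | base =>
    have : Nat.centralBinom 1 = 2 := by decide
    rw [this]
    push_cast
    rw [Real.sqrt_one]
    norm_num
  | succ k hk ih =>
    have ha : (0:ℝ) ≤ Real.sqrt k := Real.sqrt_nonneg _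
    have hb : (0:ℝ) ≤ Real.sqrt (k+1) := Real.sqrt_nonneg _
    have ha2 : Real.sqrt k ^ 2 = (k:ℝ) := Real.sq_sqrt (by positivity)
    have hb2 : Real.sqrt ((k:ℝ)+1) ^ 2 = (k:ℝ)+1 := Real.sq_sqrt (by positivity)
    have hCB : (0:ℝ) ≤ (Nat.centralBinom k : ℝ) := by positivity
    have hcb : ((k:ℝ)+1) * (Nat.centralBinom (k+1) : ℝ)
        = 2*(2*(k:ℝ)+1) * (Nat.centralBinom k : ℝ) := by
      have := Nat.succ_mul_centralBinom_succ k
      have h2 := congrArg (fun m : ℕ => (m : ℝ)) this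
      push_cast at h2
      linarith [h2]
    have key : 2 * Real.sqrt k * ((k:ℝ)+1) ≤ Real.sqrt ((k:ℝ)+1) * (2*(k:ℝ)+1) := by
      nlinarith [ha, hb, ha2, hb2, sq_nonneg (Real.sqrt ((k:ℝ)+1) * (2*(k:ℝ)+1)
        - 2 * Real.sqrt k * ((k:ℝ)+1)), sq_nonneg (Real.sqrt ((k:ℝ)+1) - Real.sqrt k),
        mul_nonneg ha hb]
    have hk1 : (0:ℝ) < (k:ℝ)+1 := by positivity
    have main : ((k:ℝ)+1) * (4:ℝ)^(k+1) ≤ ((k:ℝ)+1) * (2 * Real.sqrt ((k:ℝ)+1)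
        * (Nat.centralBinom (k+1) : ℝ)) := by
      calc ((k:ℝ)+1) * (4:ℝ)^(k+1) = (4:ℝ)^k * (4*((k:ℝ)+1)) := by ring
        _ ≤ (2 * Real.sqrt k * (Nat.centralBinom k : ℝ)) * (4*((k:ℝ)+1)) := by
            apply mul_le_mul_of_nonneg_right ih (by positivity)
        _ = (Nat.centralBinom k : ℝ) * 4 * (2 * Real.sqrt k * ((k:ℝ)+1)) := by ring
        _ ≤ (Nat.centralBinom k : ℝ) * 4 * (Real.sqrt ((k:ℝ)+1) * (2*(k:ℝ)+1)) := by
            apply mul_le_mul_of_nonneg_left key (by positivity)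
        _ = 2 * Real.sqrt ((k:ℝ)+1) * (2*(2*(k:ℝ)+1) * (Nat.centralBinom k : ℝ)) := by ring
        _ = 2 * Real.sqrt ((k:ℝ)+1) * (((k:ℝ)+1) * (Nat.centralBinom (k+1) : ℝ)) := by
            rw [hcb]
        _ = ((k:ℝ)+1) * (2 * Real.sqrt ((k:ℝ)+1) * (Nat.centralBinom (k+1) : ℝ)) := by ring
    have := le_of_mul_le_mul_left main hk1
    convert this using 3
    · rfl
    · push_cast
      ring

lemma sqrt_four : Real.sqrt 4 = 2 := by
  rw [show (4:ℝ) = 2^2 by norm_num, Real.sqrt_sq (by norm_num : (0:ℝ) ≤ 2)]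

lemma central_bound (n : ℕ) (hn : 2 ≤ n) :
    (2:ℝ)^n / Real.sqrt (2*((n:ℝ)+1)) ≤ (n.choose ((n+1)/2) : ℝ) := by
  rcases Nat.even_or_odd n with ⟨k, hk⟩ | ⟨k, hk⟩
  · -- n = 2k
    have hkk : n = 2 * k := by omega
    have hk1 : 1 ≤ k := by omega
    have hh : (n+1)/2 = k := by omega
    rw [hh, hkk]
    have hch : ((2*k).choose k : ℝ) = (Nat.centralBinom k : ℝ) := by
      rw [Nat.centralBinom]
    rw [hch]
    have h1 : (2:ℝ)^(2*k) = 4^k := by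
      rw [pow_mul]; norm_num
    have h2 : (2:ℝ) * Real.sqrt k ≤ Real.sqrt (2*((2*k:ℕ):ℝ)+1) := by
      rw [show (2:ℝ) * Real.sqrt k = Real.sqrt 4 * Real.sqrt k by rw [sqrt_four],
        ← Real.sqrt_mul (by norm_num)]
      apply Real.sqrt_le_sqrt
      push_cast
      linarith
    have h2' : (2:ℝ) * Real.sqrt k ≤ Real.sqrt (2*(((2*k:ℕ):ℝ)+1)) := by
      refine h2.trans (Real.sqrt_le_sqrt ?_)
      push_cast
      linarith
    have hsk : (0:ℝ) < 2 * Real.sqrt k := by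
      have : (0:ℝ) < Real.sqrt k := Real.sqrt_pos.mpr (by positivity)
      linarith
    calc (2:ℝ)^(2*k) / Real.sqrt (2*(((2*k:ℕ):ℝ)+1)) ≤ (4:ℝ)^k / (2 * Real.sqrt k) := by
          rw [h1]
          apply div_le_div_of_nonneg_left (by positivity) hsk h2'
      _ ≤ (Nat.centralBinom k : ℝ) := by
          rw [div_le_iff₀ hsk]
          calc (4:ℝ)^k ≤ 2 * Real.sqrt k * (Nat.centralBinom k : ℝ) := cb_sqrt k hk1
            _ = (Nat.centralBinom k : ℝ) * (2 * Real.sqrt k) := by ring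
  · -- n = 2k+1
    have hkk : n = 2 * k + 1 := hk
    have hh : (n+1)/2 = k + 1 := by omega
    rw [hh, hkk]
    have hCB2 : Nat.centralBinom (k+1) = 2 * ((2*k+1).choose (k+1)) := by
      rw [Nat.centralBinom]
      have e1 : 2*(k+1) = (2*k+1) + 1 := by ring
      rw [e1, Nat.choose_succ_succ]
      have e2 : (2*k+1).choose k = (2*k+1).choose (k+1) := by
        have := Nat.choose_symm (show k+1 ≤ 2*k+1 by omega)
        have e3 : 2*k+1 - (k+1) = k := by omega
        rw [e3] at this
        exact this
      rw [e2]
      ring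
    have hcb : (4:ℝ)^(k+1) ≤ 2 * Real.sqrt ((k:ℝ)+1) * (Nat.centralBinom (k+1) : ℝ) :=
      by
        have := cb_sqrt (k+1) (by omega)
        push_cast at this ⊢
        convert this using 4
    have hchoose : (Nat.centralBinom (k+1) : ℝ) = 2 * ((2*k+1).choose (k+1) : ℝ) := by
      exact_mod_cast congrArg (fun m : ℕ => (m:ℝ)) hCB2
    have hsq : Real.sqrt (2*(((2*k+1:ℕ):ℝ)+1)) = 2 * Real.sqrt ((k:ℝ)+1) := by
      push_cast
      rw [show (2:ℝ)*((2*(k:ℝ)+1)+1) = 4*((k:ℝ)+1) by ring]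
      rw [Real.sqrt_mul (by norm_num : (0:ℝ) ≤ 4), sqrt_four]
    rw [hsq]
    have hskpos : (0:ℝ) < Real.sqrt ((k:ℝ)+1) := Real.sqrt_pos.mpr (by positivity)
    rw [div_le_iff₀ (by positivity)]
    have : (2:ℝ)^(2*k+1) = 4^(k+1)/2 := by
      rw [pow_succ, pow_mul]
      norm_num
      ring
    rw [this]
    rw [div_le_iff₀ (by norm_num : (0:ℝ) < 2)]
    calc (4:ℝ)^(k+1) ≤ 2 * Real.sqrt ((k:ℝ)+1) * (Nat.centralBinom (k+1) : ℝ) := hcb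
      _ = 2 * Real.sqrt ((k:ℝ)+1) * (2 * ((2*k+1).choose (k+1) : ℝ)) := by rw [hchoose]
      _ = ((2*k+1).choose (k+1) : ℝ) * (2 * Real.sqrt ((k:ℝ)+1)) * 2 := by ring

end AVD

namespace AVD

lemma choose_ratio (n h : ℕ) (hh : (h:ℝ) ≤ ((n:ℝ)+1)/2) :
    ∀ r : ℕ, h + r ≤ n → (r:ℝ) ≤ ((n:ℝ)+1)/2 →
      (n.choose h : ℝ) * ∏ j ∈ Finset.range r,
          ((((n:ℝ)+1)/2 - ((j:ℝ)+1)) / (((n:ℝ)+1)/2 + ((j:ℝ)+1)))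
        ≤ (n.choose (h + r) : ℝ) := by
  intro r
  induction r with
  | zero => intro _ _; simp
  | succ r ih =>
    intro hrn hrA
    set A := ((n:ℝ)+1)/2 with hA
    have hrA' : (r:ℝ) ≤ A := by
      push_cast at hrA ⊢
      linarith
    have hrn' : h + r ≤ n := by omega
    have IH := ih hrn' hrA'
    rw [Finset.prod_range_succ, ← mul_assoc]
    set k := h + r with hk
    have hkn : k < n := by omega
    have hfnonneg : (0:ℝ) ≤ (A - ((r:ℝ)+1)) / (A + ((r:ℝ)+1)) := by
      apply div_nonneg
      · push_cast at hrA; linarith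
      · positivity
    have hkr : (k:ℝ) = (h:ℝ) + (r:ℝ) := by rw [hk]; push_cast; ring
    have hnR : (h:ℝ) + ((r:ℝ)+1) ≤ (n:ℝ) := by exact_mod_cast hrn
    have hrA2 : (r:ℝ) + 1 ≤ A := by push_cast at hrA; linarith
    have hfle : (A - ((r:ℝ)+1)) / (A + ((r:ℝ)+1)) ≤ ((n:ℝ) - (k:ℝ)) / ((k:ℝ)+1) := by
      apply div_le_div₀
      · linarith [hkr, hnR]
      · linarith [hkr, hnR, hh, hrA2]
      · positivity
      · linarith [hkr, hh]
    have hC : (n.choose (k+1) : ℝ) = (n.choose k : ℝ) * (((n:ℝ) - (k:ℝ)) / ((k:ℝ)+1)) := by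
      have hnc := Nat.choose_succ_right_eq n k
      have h2 := congrArg (fun m : ℕ => (m:ℝ)) hnc
      simp only [Nat.cast_mul] at h2
      have hsub : ((n - k : ℕ) : ℝ) = (n:ℝ) - (k:ℝ) := by
        rw [Nat.cast_sub (le_of_lt hkn)]
      rw [hsub] at h2
      have hkpos : (0:ℝ) < (k:ℝ)+1 := by positivity
      field_simp
      push_cast at h2 ⊢
      linarith
    have hstep : (n.choose h : ℝ) * (∏ j ∈ Finset.range r, ((A - ((j:ℝ)+1)) / (A + ((j:ℝ)+1))))
        * ((A - ((r:ℝ)+1)) / (A + ((r:ℝ)+1)))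
        ≤ (n.choose k : ℝ) * ((A - ((r:ℝ)+1)) / (A + ((r:ℝ)+1))) :=
      mul_le_mul_of_nonneg_right IH hfnonneg
    have hstep2 : (n.choose k : ℝ) * ((A - ((r:ℝ)+1)) / (A + ((r:ℝ)+1)))
        ≤ (n.choose k : ℝ) * (((n:ℝ) - (k:ℝ)) / ((k:ℝ)+1)) :=
      mul_le_mul_of_nonneg_left hfle (by positivity)
    have : h + (r + 1) = k + 1 := by omega
    rw [this, hC]
    exact le_trans hstep hstep2

lemma sum_range_add_one (r : ℕ) :
    (∑ j ∈ Finset.range r, ((j:ℝ)+1)) = (r:ℝ)*((r:ℝ)+1)/2 := by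
  induction r with
  | zero => simp
  | succ r ih =>
    rw [Finset.sum_range_succ, ih]
    push_cast
    ring

lemma prod_exp (A : ℝ) (r : ℕ) (hr : (r:ℝ) < A) :
    Real.exp (-((r:ℝ)*((r:ℝ)+1))/(A - r)) ≤
      ∏ j ∈ Finset.range r, ((A - ((j:ℝ)+1)) / (A + ((j:ℝ)+1))) := by
  have hApos : (0:ℝ) < A - r := by linarith
  have hfactor : ∀ j ∈ Finset.range r,
      Real.exp (-(2*((j:ℝ)+1))/(A - r)) ≤ (A - ((j:ℝ)+1)) / (A + ((j:ℝ)+1)) := by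
    intro j hj
    have hjr : (j:ℝ)+1 ≤ (r:ℝ) := by
      have h := Finset.mem_range.mp hj
      have : (j:ℝ) + 1 ≤ (r:ℝ) := by exact_mod_cast h
      linarith
    have hj0 : (0:ℝ) ≤ (j:ℝ) := Nat.cast_nonneg j
    have hnum : (0:ℝ) < A - ((j:ℝ)+1) := by linarith
    have hden : (0:ℝ) < A + ((j:ℝ)+1) := by linarith
    set y := 2*((j:ℝ)+1)/(A - r) with hy
    have hy0 : (0:ℝ) ≤ y := by positivity
    have h1y : (0:ℝ) < 1 + y := by linarith
    have hexp : 1 + y ≤ Real.exp y := by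
      have := Real.add_one_le_exp y
      linarith
    have hyN : 2*((j:ℝ)+1) ≤ y * (A - ((j:ℝ)+1)) := by
      rw [hy, div_mul_eq_mul_div, le_div_iff₀ hApos]
      nlinarith [hjr, hj0]
    have h2 : (A + ((j:ℝ)+1)) ≤ (1+y)*(A - ((j:ℝ)+1)) := by nlinarith [hyN]
    have e1 : Real.exp (-(2*((j:ℝ)+1))/(A-r)) = (Real.exp y)⁻¹ := by
      rw [hy, neg_div, Real.exp_neg]
    rw [e1]
    calc (Real.exp y)⁻¹ ≤ (1+y)⁻¹ := by
          apply inv_anti₀ h1y hexp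
      _ ≤ (A - ((j:ℝ)+1)) / (A + ((j:ℝ)+1)) := by
          rw [inv_eq_one_div, div_le_div_iff₀ h1y hden]
          linarith [h2]
  have hsum : ∑ j ∈ Finset.range r, (-(2*((j:ℝ)+1))/(A-r)) = -((r:ℝ)*((r:ℝ)+1))/(A-r) := by
    rw [← Finset.sum_div]
    congr 1
    have h1 : ∑ j ∈ Finset.range r, (-(2*((j:ℝ)+1))) = (-2) * ∑ j ∈ Finset.range r, ((j:ℝ)+1) := by
      rw [Finset.mul_sum]
      apply Finset.sum_congr rfl
      intro j _
      ring
    rw [h1, sum_range_add_one]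
    ring
  calc Real.exp (-((r:ℝ)*((r:ℝ)+1))/(A - r))
      = ∏ j ∈ Finset.range r, Real.exp (-(2*((j:ℝ)+1))/(A-r)) := by
        rw [← Real.exp_sum, hsum]
    _ ≤ ∏ j ∈ Finset.range r, ((A - ((j:ℝ)+1)) / (A + ((j:ℝ)+1))) :=
        Finset.prod_le_prod (fun j _ => (Real.exp_pos _).le) hfactor

end AVD

namespace AVD

set_option maxHeartbeats 1600000 in
lemma keybound (n : ℕ) (hn : 80 ≤ n) :
    ∃ k0 : ℕ, ((n:ℝ)/2 + (3/10) * Real.sqrt ((n:ℝ) * Real.log n) ≤ (k0:ℝ)) ∧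
      ((5:ℝ)/4 * 2^n / (n:ℝ) ≤ (n.choose k0 : ℝ)) := by
  have hn80R : (80:ℝ) ≤ (n:ℝ) := by exact_mod_cast hn
  have hnpos : (0:ℝ) < (n:ℝ) := by linarith
  set x := Real.log n with hxdef
  have hxpos : 0 < x := Real.log_pos (by exact_mod_cast (by omega : 1 < n))
  -- lower bound on log n
  have hx1 : (4.3668:ℝ) ≤ x := by
    have hpow : (2:ℝ)^63 ≤ (n:ℝ)^10 := by
      calc (2:ℝ)^63 ≤ (80:ℝ)^10 := by norm_num
        _ ≤ (n:ℝ)^10 := by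
            apply pow_le_pow_left₀ (by norm_num) hn80R
    have hlogs : Real.log ((2:ℝ)^63) ≤ Real.log ((n:ℝ)^10) :=
      Real.log_le_log (by positivity) hpow
    rw [Real.log_pow, Real.log_pow] at hlogs
    have hl2 := Real.log_two_gt_d9
    push_cast at hlogs
    nlinarith [hlogs, hl2]
  have hlog2u : Real.log 2 < 0.6931471808 := Real.log_two_lt_d9
  have hlog54 : Real.log ((5:ℝ)/4) ≤ 0.23105 := by
    have h3 : Real.log (((5:ℝ)/4)^3) ≤ Real.log 2 :=
      Real.log_le_log (by positivity) (by norm_num)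
    rw [Real.log_pow] at h3
    push_cast at h3
    linarith
  have hlog80 : Real.log 80 ≤ 4.39 := by
    have h80 : (80:ℝ) = 2^6 * (5/4) := by norm_num
    rw [h80, Real.log_mul (by positivity) (by norm_num), Real.log_pow]
    push_cast
    linarith
  have hx2 : x ≤ 0.0125*(n:ℝ) + 3.39 := by
    have hdiv : Real.log ((n:ℝ)/80) ≤ (n:ℝ)/80 - 1 :=
      Real.log_le_sub_one_of_pos (by positivity)
    rw [Real.log_div (by positivity) (by norm_num)] at hdiv
    have : x - Real.log 80 ≤ (n:ℝ)/80 - 1 := hdiv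
    linarith
  have hx3 : x ≤ 0.055*(n:ℝ) := by linarith
  set t := Real.sqrt ((n:ℝ) * x) with htdef
  have ht0 : 0 ≤ t := Real.sqrt_nonneg _
  have ht2 : t^2 = (n:ℝ)*x := Real.sq_sqrt (by positivity)
  have h349 : (349.3161:ℝ) ≤ t^2 := by
    rw [ht2]
    nlinarith [hn80R, hx1, hxpos]
  have ht189 : (18.69:ℝ) ≤ t := by nlinarith [h349, ht0]
  have hnt2 : 4.3668*(n:ℝ) ≤ t^2 := by
    rw [ht2]
    nlinarith [hx1, hnpos]
  have hxt : x*t ≤ 0.2346*t^2 := by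
    have hx2' : x*x ≤ 0.055*((n:ℝ)*x) := by nlinarith [hx3, hxpos]
    rw [← ht2] at hx2'
    nlinarith [mul_self_nonneg (0.2346*t - x), hx2']
  have htn : t ≤ 0.2346*(n:ℝ) := by
    have hn2 : t^2 ≤ 0.055*(n:ℝ)^2 := by
      rw [ht2]
      nlinarith [hx3, hnpos]
    have h1 : t^2 ≤ (0.2346*(n:ℝ))^2 := by nlinarith [hn2, sq_nonneg (n:ℝ)]
    calc t = Real.sqrt (t^2) := (Real.sqrt_sq ht0).symm
      _ ≤ Real.sqrt ((0.2346*(n:ℝ))^2) := Real.sqrt_le_sqrt h1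
      _ = 0.2346*(n:ℝ) := Real.sqrt_sq (by positivity)
  set m := (3/10)*t with hmdef
  have hm0 : 0 ≤ m := by positivity
  set r := ⌈m⌉₊ with hrdef
  have hrm : m ≤ (r:ℝ) := Nat.le_ceil m
  have hrm1 : (r:ℝ) ≤ m + 1 := (Nat.ceil_lt_add_one hm0).le
  set h := (n+1)/2 with hhdef
  have hhA : (h:ℝ) ≤ ((n:ℝ)+1)/2 := by
    rw [hhdef]
    have := Nat.cast_div_le (α := ℝ) (m := n+1) (n := 2)
    push_cast at this
    exact this
  have hhn2 : (n:ℝ)/2 ≤ (h:ℝ) := by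
    have hnn : n ≤ 2 * ((n+1)/2) := by omega
    have : (n:ℝ) ≤ 2*(h:ℝ) := by exact_mod_cast hnn
    linarith
  -- r and h+r bounds
  have hrsmall : (r:ℝ) ≤ 0.07038*(n:ℝ) + 1 := by
    have : m ≤ 0.07038*(n:ℝ) := by rw [hmdef]; linarith [htn]
    linarith
  have hrn : h + r ≤ n := by
    have hreal : ((h + r : ℕ):ℝ) ≤ (n:ℝ) := by
      push_cast
      have h1 : (h:ℝ) ≤ (n:ℝ)/2 + 0.5 := by linarith
      linarith [hrsmall, hn80R]
    exact_mod_cast hreal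
  have hrA : (r:ℝ) < ((n:ℝ)+1)/2 := by linarith [hrsmall, hn80R]
  have hdenlb : (n:ℝ)/2 - m - 1 ≤ ((n:ℝ)+1)/2 - (r:ℝ) := by linarith
  have hdenpos : 0 < (n:ℝ)/2 - m - 1 := by
    rw [hmdef]
    linarith [htn, hn80R]
  refine ⟨h + r, ?_, ?_⟩
  · push_cast
    linarith [hhn2, hrm]
  -- main choose bound
  have hlogn1 : Real.log ((n:ℝ)+1) ≤ x + 0.0125 := by
    have hdiv : Real.log (((n:ℝ)+1)/n) ≤ ((n:ℝ)+1)/n - 1 :=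
      Real.log_le_sub_one_of_pos (by positivity)
    rw [Real.log_div (by positivity) (by positivity)] at hdiv
    have he : ((n:ℝ)+1)/n - 1 = 1/n := by field_simp; ring
    rw [he] at hdiv
    have : (1:ℝ)/n ≤ 0.0125 := by
      rw [div_le_iff₀ hnpos]
      linarith
    linarith
  have hmain : (r:ℝ)*((r:ℝ)+1)/(((n:ℝ)+1)/2 - r)
      ≤ x - Real.log ((5:ℝ)/4) - (1/2)*Real.log (2*((n:ℝ)+1)) := by
    have hnum : (r:ℝ)*((r:ℝ)+1) ≤ (m+1)*(m+2) := by nlinarith [hrm1, hrm, hm0]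
    have hstep1 : (r:ℝ)*((r:ℝ)+1)/(((n:ℝ)+1)/2 - r) ≤ (m+1)*(m+2)/((n:ℝ)/2 - m - 1) := by
      apply div_le_div₀ (by nlinarith [hm0]) hnum hdenpos hdenlb
    have hstep2 : (m+1)*(m+2)/((n:ℝ)/2 - m - 1) ≤ x/2 - 0.584 := by
      rw [div_le_iff₀ hdenpos, hmdef]
      have c1 : 0.15*(x*t) ≤ 0.03519*t^2 := by linarith [hxt]
      have c2 : 0.5*x ≤ 0.0275*(n:ℝ) := by linarith [hx3]
      have c3 : 0.3195*(n:ℝ) ≤ 0.07317*t^2 := by linarith [hnt2]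
      have c4 : 0.7248*t ≤ 0.0388*t^2 := by nlinarith [ht189, ht0]
      have c5 : (1.416:ℝ) ≤ 0.00406*t^2 := by linarith [h349]
      nlinarith [c1, c2, c3, c4, c5, ht2]
    have hlog2n1 : Real.log (2*((n:ℝ)+1)) = Real.log 2 + Real.log ((n:ℝ)+1) :=
      Real.log_mul (by norm_num) (by positivity)
    rw [hlog2n1]
    linarith [hstep1, hstep2, hlog54, hlog2u, hlogn1]
  -- assemble
  have hD : (0:ℝ) < 2*((n:ℝ)+1) := by positivity
  have hsD : (0:ℝ) < Real.sqrt (2*((n:ℝ)+1)) := Real.sqrt_pos.mpr hD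
  have hcentral := central_bound n (by omega)
  rw [← hhdef] at hcentral
  have hratio := choose_ratio n h hhA r hrn hrA.le
  have hprodexp := prod_exp (((n:ℝ)+1)/2) r hrA
  have hz : (0:ℝ) < (5:ℝ)/4 * Real.sqrt (2*((n:ℝ)+1)) / n := by positivity
  have hlogz : Real.log ((5:ℝ)/4 * Real.sqrt (2*((n:ℝ)+1)) / n)
      = Real.log ((5:ℝ)/4) + (1/2)*Real.log (2*((n:ℝ)+1)) - x := by
    rw [Real.log_div (by positivity) (by positivity),
      Real.log_mul (by norm_num) (ne_of_gt hsD), Real.log_sqrt hD.le]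
    rw [hxdef]
    ring
  have hexp_ge : (5:ℝ)/4 * Real.sqrt (2*((n:ℝ)+1)) / n
      ≤ Real.exp (-((r:ℝ)*((r:ℝ)+1))/(((n:ℝ)+1)/2 - r)) := by
    rw [← Real.exp_log hz, hlogz]
    apply Real.exp_le_exp.mpr
    rw [neg_div]
    linarith [hmain]
  have hP0 : (0:ℝ) ≤ ∏ j ∈ Finset.range r,
      ((((n:ℝ)+1)/2 - ((j:ℝ)+1)) / (((n:ℝ)+1)/2 + ((j:ℝ)+1))) :=
    le_trans (Real.exp_pos _).le hprodexp
  have hchain : (2:ℝ)^n / Real.sqrt (2*((n:ℝ)+1))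
      * ((5:ℝ)/4 * Real.sqrt (2*((n:ℝ)+1)) / n) ≤ (n.choose (h+r) : ℝ) := by
    calc (2:ℝ)^n / Real.sqrt (2*((n:ℝ)+1)) * ((5:ℝ)/4 * Real.sqrt (2*((n:ℝ)+1)) / n)
        ≤ (n.choose h : ℝ) * (∏ j ∈ Finset.range r,
            ((((n:ℝ)+1)/2 - ((j:ℝ)+1)) / (((n:ℝ)+1)/2 + ((j:ℝ)+1)))) := by
          apply mul_le_mul hcentral (le_trans hexp_ge hprodexp) hz.le
          positivity
      _ ≤ (n.choose (h+r) : ℝ) := hratio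
  have heq : (2:ℝ)^n / Real.sqrt (2*((n:ℝ)+1))
      * ((5:ℝ)/4 * Real.sqrt (2*((n:ℝ)+1)) / n) = (5:ℝ)/4 * 2^n / n := by
    field_simp
  rw [heq] at hchain
  exact hchain

end AVD

namespace AVD

lemma card_ne (j : Fin (n+1)) : Fintype.card {i : Fin (n+1) // i ≠ j} = n := by
  have h1 : Fintype.card {i : Fin (n+1) // i ≠ j}
      = Fintype.card (Fin (n+1)) - Fintype.card {i : Fin (n+1) // i = j} :=
    Fintype.card_subtype_compl _
  rw [h1, Fintype.card_subtype_eq, Fintype.card_fin]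
  omega

lemma sumA_D (τ : Fin (n+1)) (A : Finset (Wn n))
    (hA : ∀ w ∈ A, ∀ (c : {i : Fin (n+1) // i ≠ τ} → Bool),
      Function.update w τ c ∈ A) :
    ∑ w ∈ A, (Dc w τ : ℝ) = (A.card : ℝ) * n / 2 := by
  have hDc : ∀ w : Wn n, (Dc w τ : ℝ)
      = ∑ i : {i : Fin (n+1) // i ≠ τ}, (if w τ i then (1:ℝ) else 0) := by
    intro w
    unfold Dc wt
    rw [Finset.card_filter, Nat.cast_sum]
    apply Finset.sum_congr rfl
    intro i _
    split_ifs <;> simp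
  rw [Finset.sum_congr rfl (fun w _ => hDc w), Finset.sum_comm]
  have hinner : ∀ i : {i : Fin (n+1) // i ≠ τ},
      ∑ w ∈ A, (if w τ i then (1:ℝ) else 0) = (A.card:ℝ)/2 := by
    intro i
    set flip : Wn n → Wn n :=
      fun w => Function.update w τ (Function.update (w τ) i (!(w τ i))) with hflipdef
    have hflip_τ : ∀ w : Wn n, flip w τ = Function.update (w τ) i (!(w τ i)) := by
      intro w
      rw [hflipdef]
      exact Function.update_self τ _ w
    have hflipA : ∀ w ∈ A, flip w ∈ A := by
      intro w hw
      exact hA w hw _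
    have hflipflip : ∀ w : Wn n, flip (flip w) = w := by
      intro w
      funext j
      by_cases hj : j = τ
      · subst hj
        rw [hflip_τ, hflip_τ, Function.update_self, Bool.not_not, Function.update_idem,
          Function.update_eq_self]
      · simp only [hflipdef]
        rw [Function.update_of_ne hj, Function.update_of_ne hj]
    have hkey : ∑ w ∈ A, ((if w τ i then (1:ℝ) else 0) - 1/2) = 0 := by
      apply Finset.sum_involution (fun w _ => flip w)
      · intro w hw
        have : flip w τ i = !(w τ i) := by rw [hflip_τ, Function.update_self]
        rw [this]
        cases hwi : w τ i <;> norm_num [hwi]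
      · intro w hw hne heq
        have h1 := congrFun heq τ
        rw [hflip_τ] at h1
        have h2 := congrFun h1 i
        rw [Function.update_self] at h2
        cases hwi : w τ i <;> rw [hwi] at h2 <;> simp at h2
      · intro w hw
        exact hflipA w hw
      · intro w hw
        exact hflipflip w
    have hsplit : ∑ w ∈ A, (if w τ i then (1:ℝ) else 0)
        = (∑ w ∈ A, ((if w τ i then (1:ℝ) else 0) - 1/2)) + ∑ w ∈ A, (1/2:ℝ) := by
      rw [← Finset.sum_add_distrib]
      apply Finset.sum_congr rfl
      intro w _
      ring
    rw [hsplit, hkey, zero_add, Finset.sum_const, nsmul_eq_mul]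
    ring
  rw [Finset.sum_congr rfl (fun i _ => hinner i), Finset.sum_const, nsmul_eq_mul,
    Finset.card_univ, card_ne]
  ring

end AVD

namespace AVD

set_option maxHeartbeats 1600000 in
lemma core_bound (n : ℕ) (hn : 80 ≤ n) (τ : Fin (n+1)) :
    (2:ℝ)^(n*(n+1)) * ((1/6) * Real.sqrt ((n:ℝ) * Real.log n))
      ≤ ∑ w : Wn n, ((Mx w : ℝ) - (Dc w τ : ℝ)) := by
  obtain ⟨k0, hk0half, hk0choose⟩ := keybound n hn
  classical
  set A := Finset.univ.filter (fun w : Wn n => ∃ j, j ≠ τ ∧ k0 ≤ Dc w j) with hAdef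
  -- Step 1 : lower bound sum by sum over A
  have hMD : ∀ w : Wn n, (Dc w τ : ℝ) ≤ (Mx w : ℝ) := by
    intro w
    exact_mod_cast Nat.cast_le.mpr (Finset.le_sup (f := Dc w) (Finset.mem_univ τ))
  have s1 : ∑ w ∈ A, ((k0:ℝ) - (Dc w τ : ℝ)) ≤ ∑ w : Wn n, ((Mx w : ℝ) - (Dc w τ : ℝ)) := by
    calc ∑ w ∈ A, ((k0:ℝ) - (Dc w τ : ℝ)) ≤ ∑ w ∈ A, ((Mx w : ℝ) - (Dc w τ : ℝ)) := by
          apply Finset.sum_le_sum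
          intro w hw
          have hw2 := (Finset.mem_filter.mp hw).2
          obtain ⟨j, _, hD⟩ := hw2
          have : (k0:ℝ) ≤ (Mx w : ℝ) := by
            exact_mod_cast Nat.cast_le.mpr
              (le_trans hD (Finset.le_sup (f := Dc w) (Finset.mem_univ j)))
          linarith
      _ ≤ ∑ w : Wn n, ((Mx w : ℝ) - (Dc w τ : ℝ)) := by
          apply Finset.sum_le_sum_of_subset_of_nonneg (Finset.filter_subset _ _)
          intro w _ _
          linarith [hMD w]
  -- Step 2 : evaluate the sum over A
  have hAclosed : ∀ w ∈ A, ∀ (c : {i : Fin (n+1) // i ≠ τ} → Bool),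
      Function.update w τ c ∈ A := by
    intro w hw c
    rw [hAdef, Finset.mem_filter] at hw ⊢
    obtain ⟨_, j, hj, hD⟩ := hw
    refine ⟨Finset.mem_univ _, j, hj, ?_⟩
    have : Function.update w τ c j = w j := Function.update_of_ne hj _ _
    unfold Dc
    rw [this]
    exact hD
  have s2 : ∑ w ∈ A, ((k0:ℝ) - (Dc w τ : ℝ)) = (A.card:ℝ) * ((k0:ℝ) - (n:ℝ)/2) := by
    rw [Finset.sum_sub_distrib, sumA_D τ A hAclosed, Finset.sum_const, nsmul_eq_mul]
    ring
  -- Step 3 : the event A has probability at least 5/9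
  have hNcard : Fintype.card (Wn n) = 2^(n*(n+1)) := by
    rw [Fintype.card_pi]
    have : ∀ j : Fin (n+1), Fintype.card ({i : Fin (n+1) // i ≠ j} → Bool) = 2^n := by
      intro j
      rw [Fintype.card_fun, Fintype.card_bool, card_ne]
    rw [Finset.prod_congr rfl (fun j _ => this j), Finset.prod_const, Finset.card_univ,
      Fintype.card_fin, ← pow_mul]
  have hsplit : A.card + (Finset.univ.filter
      (fun w : Wn n => ¬ ∃ j, j ≠ τ ∧ k0 ≤ Dc w j)).card = 2^(n*(n+1)) := by
    rw [hAdef, Finset.card_filter_add_card_filter_not, Finset.card_univ, hNcard]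
  set S : ∀ j : Fin (n+1), Finset ({i : Fin (n+1) // i ≠ j} → Bool) :=
    fun j => if j = τ then Finset.univ else Finset.univ.filter (fun c => wt c < k0) with hSdef
  have hpi : Finset.univ.filter (fun w : Wn n => ¬ ∃ j, j ≠ τ ∧ k0 ≤ Dc w j)
      = Fintype.piFinset S := by
    ext w
    simp only [Finset.mem_filter, Finset.mem_univ, true_and, Fintype.mem_piFinset]
    push_neg
    constructor
    · intro hw j
      by_cases hj : j = τ
      · simp [hSdef, hj]
      · simp only [hSdef, if_neg hj, Finset.mem_filter, Finset.mem_univ, true_and]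
        exact hw j hj
    · intro hw j hj
      have := hw j
      simp only [hSdef, if_neg hj, Finset.mem_filter, Finset.mem_univ, true_and] at this
      exact this
  have hcomplcard : (Finset.univ.filter
      (fun w : Wn n => ¬ ∃ j, j ≠ τ ∧ k0 ≤ Dc w j)).card
      ≤ 2^n * (2^n - n.choose k0)^n := by
    rw [hpi, Fintype.card_piFinset]
    rw [← Finset.mul_prod_erase Finset.univ _ (Finset.mem_univ τ)]
    have hSτ : (S τ).card = 2^n := by
      have hu : S τ = Finset.univ := by rw [hSdef]; simp
      rw [hu, Finset.card_univ, Fintype.card_fun, Fintype.card_bool, card_ne]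
    have hSj : ∀ j ∈ Finset.univ.erase τ, (S j).card ≤ 2^n - n.choose k0 := by
      intro j hj
      have hjτ : j ≠ τ := (Finset.mem_erase.mp hj).1
      rw [hSdef]
      simp only [if_neg hjτ]
      have := card_wt_lt_le (α := {i : Fin (n+1) // i ≠ j}) k0
      rw [card_ne] at this
      exact this
    calc (S τ).card * ∏ j ∈ Finset.univ.erase τ, (S j).card
        ≤ 2^n * ∏ j ∈ Finset.univ.erase τ, (2^n - n.choose k0) := by
          rw [hSτ]
          exact Nat.mul_le_mul_left _ (Finset.prod_le_prod' hSj)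
      _ = 2^n * (2^n - n.choose k0)^n := by
          rw [Finset.prod_const, Finset.card_erase_of_mem (Finset.mem_univ τ),
            Finset.card_univ, Fintype.card_fin, Nat.add_sub_cancel]
  -- real arithmetic for the probability bound
  have hn80R : (80:ℝ) ≤ (n:ℝ) := by exact_mod_cast hn
  have hnpos : (0:ℝ) < (n:ℝ) := by linarith
  have h2npos : (0:ℝ) < (2:ℝ)^n := by positivity
  have hC2n : n.choose k0 ≤ 2^n := choose_le_two_pow n k0
  set ρ : ℝ := (n.choose k0 : ℝ) / 2^n with hρdef
  have hρ0 : 0 ≤ ρ := by positivity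
  have hρ1 : ρ ≤ 1 := by
    rw [hρdef, div_le_one h2npos]
    exact_mod_cast hC2n
  have hnρ : (5:ℝ)/4 ≤ (n:ℝ) * ρ := by
    rw [hρdef, ← mul_div_assoc, le_div_iff₀ h2npos]
    have hmul := mul_le_mul_of_nonneg_left hk0choose hnpos.le
    have heq : (n:ℝ)*((5:ℝ)/4*2^n/(n:ℝ)) = 5/4*2^n := by field_simp
    linarith [hmul, heq]
  have hq : (1 - ρ)^n ≤ 4/9 := by
    have h1 : ((1-ρ)*(1+ρ))^n ≤ 1 := by
      apply pow_le_one₀ (by nlinarith) (by nlinarith)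
    have h2 : 1 + (n:ℝ)*ρ ≤ (1+ρ)^n := by
      have := one_add_mul_le_pow (show (-2:ℝ) ≤ ρ by linarith) n
      linarith [this]
    have h3 : (1-ρ)^n * (1 + (n:ℝ)*ρ) ≤ 1 := by
      calc (1-ρ)^n * (1 + (n:ℝ)*ρ) ≤ (1-ρ)^n * (1+ρ)^n := by
            apply mul_le_mul_of_nonneg_left h2 (pow_nonneg (by linarith) n)
        _ = ((1-ρ)*(1+ρ))^n := (mul_pow _ _ n).symm
        _ ≤ 1 := h1
    nlinarith [h3, pow_nonneg (show (0:ℝ) ≤ 1-ρ by linarith) n, hnρ]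
  have hcomplR : ((Finset.univ.filter
      (fun w : Wn n => ¬ ∃ j, j ≠ τ ∧ k0 ≤ Dc w j)).card : ℝ)
      ≤ (4:ℝ)/9 * 2^(n*(n+1)) := by
    have hcast : (((2:ℕ)^n - n.choose k0 : ℕ) : ℝ) = (2:ℝ)^n - (n.choose k0 : ℝ) := by
      rw [Nat.cast_sub hC2n]
      push_cast
      ring
    have h1 : ((Finset.univ.filter
        (fun w : Wn n => ¬ ∃ j, j ≠ τ ∧ k0 ≤ Dc w j)).card : ℝ)
        ≤ (2:ℝ)^n * ((2:ℝ)^n - (n.choose k0 : ℝ))^n := by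
      have := hcomplcard
      have hcastall : ((2^n * (2^n - n.choose k0)^n : ℕ) : ℝ)
          = (2:ℝ)^n * ((2:ℝ)^n - (n.choose k0 : ℝ))^n := by
        push_cast [Nat.cast_sub hC2n]
        ring
      calc ((Finset.univ.filter
          (fun w : Wn n => ¬ ∃ j, j ≠ τ ∧ k0 ≤ Dc w j)).card : ℝ)
          ≤ ((2^n * (2^n - n.choose k0)^n : ℕ) : ℝ) := by exact_mod_cast this
        _ = (2:ℝ)^n * ((2:ℝ)^n - (n.choose k0 : ℝ))^n := hcastall
    have h2 : (2:ℝ)^n - (n.choose k0 : ℝ) = (1 - ρ) * 2^n := by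
      rw [hρdef]
      field_simp
    rw [h2] at h1
    calc ((Finset.univ.filter
        (fun w : Wn n => ¬ ∃ j, j ≠ τ ∧ k0 ≤ Dc w j)).card : ℝ)
        ≤ (2:ℝ)^n * ((1-ρ)*2^n)^n := h1
      _ = (1-ρ)^n * ((2:ℝ)^n * ((2:ℝ)^n)^n) := by rw [mul_pow]; ring
      _ = (1-ρ)^n * 2^(n*(n+1)) := by
          rw [← pow_mul, ← pow_add]
          congr 1
          ring_nf
      _ ≤ (4:ℝ)/9 * 2^(n*(n+1)) := by
          apply mul_le_mul_of_nonneg_right hq (by positivity)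
  have s3 : (5:ℝ)/9 * 2^(n*(n+1)) ≤ (A.card : ℝ) := by
    have hcast : (A.card : ℝ) + ((Finset.univ.filter
        (fun w : Wn n => ¬ ∃ j, j ≠ τ ∧ k0 ≤ Dc w j)).card : ℝ) = 2^(n*(n+1)) := by
      exact_mod_cast congrArg (fun m : ℕ => (m:ℝ)) hsplit
    linarith [hcomplR, hcast]
  -- Step 4 : combine
  have hsqrt0 : 0 ≤ Real.sqrt ((n:ℝ) * Real.log n) := Real.sqrt_nonneg _
  have hk0gain : (3:ℝ)/10 * Real.sqrt ((n:ℝ) * Real.log n) ≤ (k0:ℝ) - (n:ℝ)/2 := by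
    linarith [hk0half]
  calc (2:ℝ)^(n*(n+1)) * ((1/6) * Real.sqrt ((n:ℝ) * Real.log n))
      = ((5:ℝ)/9 * 2^(n*(n+1))) * ((3:ℝ)/10 * Real.sqrt ((n:ℝ) * Real.log n)) := by ring
    _ ≤ (A.card : ℝ) * ((k0:ℝ) - (n:ℝ)/2) := by
        apply mul_le_mul s3 hk0gain (by positivity) (by positivity)
    _ = ∑ w ∈ A, ((k0:ℝ) - (Dc w τ : ℝ)) := s2.symm
    _ ≤ ∑ w : Wn n, ((Mx w : ℝ) - (Dc w τ : ℝ)) := s1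

end AVD

/-- For every `n ≥ 80` there is an opinion poll distribution on `2(n+1)` nodes —
namely the duplication construction `owWeight n` — on which, for every choice of
default node `t`, the AVD mechanism has expected additive approximation at least
`(1/6)·√(n·ln n)`; hence AVD is `Ω(√(n·ln n))` on opinion poll instances. -/
theorem stmt_18 (n : ℕ) (hn : 80 ≤ n) (t : Fin (n + 1) ⊕ Fin (n + 1)) :
    (∑ x : (Fin (n + 1) ⊕ Fin (n + 1)) → (Fin (n + 1) ⊕ Fin (n + 1)) → Bool,
        owWeight n x * ((maxdeg x : ℝ) - (indeg x (avdWinner x t) : ℝ)))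
      ≥ (1 / 6) * Real.sqrt ((n : ℝ) * Real.log n) := by
  rw [ge_iff_le]
  have red := AVD.sum_red (n := n)
    (fun x => (maxdeg x : ℝ) - (indeg x (avdWinner x t) : ℝ))
  rw [red]
  have hsum_eq : ∑ w : AVD.Wn n, ((maxdeg (AVD.eprof w) : ℝ)
        - (indeg (AVD.eprof w) (avdWinner (AVD.eprof w) t) : ℝ))
      = ∑ w : AVD.Wn n, ((AVD.Mx w : ℝ) - (AVD.Dc w (Sum.elim id id t) : ℝ)) :=
    Finset.sum_congr rfl (fun w _ => by
      rw [AVD.winner_eq, AVD.maxdeg_eq, AVD.indeg_eq])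
  rw [hsum_eq]
  have hcore := AVD.core_bound n hn (Sum.elim id id t)
  have hconst : ((1:ℝ)/2) ^ (n*(n+1)) * ((2:ℝ)^(n*(n+1))
      * ((1/6) * Real.sqrt ((n:ℝ) * Real.log n)))
      = (1/6) * Real.sqrt ((n:ℝ) * Real.log n) := by
    rw [← mul_assoc, ← mul_pow]
    norm_num
  calc (1:ℝ)/6 * Real.sqrt ((n:ℝ) * Real.log n)
      = ((1:ℝ)/2) ^ (n*(n+1)) * ((2:ℝ)^(n*(n+1))
          * ((1/6) * Real.sqrt ((n:ℝ) * Real.log n))) := hconst.symm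
    _ ≤ ((1:ℝ)/2) ^ (n*(n+1))
          * ∑ w : AVD.Wn n, ((AVD.Mx w : ℝ) - (AVD.Dc w (Sum.elim id id t) : ℝ)) := by
        apply mul_le_mul_of_nonneg_left hcore (by positivity)
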